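/- There is no topology τ on the space of λ-a.e.-equivalence classes of measurable functions I → ℝ (the type I →ₘ[λ] ℝ of MeasureTheory.AEEqFun) such that, for every sequence (F_n) in this space and every element G, the sequence (F_n) converges to G in τ if and only if for λ-almost every x ∈ I, F_n(x) → G(x). -/

import Mathlib

open MeasureTheory Filter Topology

noncomputable section

def twM (n : ℕ) : ℕ := Nat.log 2 n
def twK (n : ℕ) : ℕ := n - 2 ^ twM n
def twA (n : ℕ) : ℝ := (twK n : ℝ) / 2 ^ twM n
def twB (n : ℕ) : ℝ := ((twK n : ℝ) + 1) / 2 ^ twM n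
def twS (n : ℕ) : Set (Set.Icc (0:ℝ) 1) := Subtype.val ⁻¹' Set.Icc (twA n) (twB n)
def tw (n : ℕ) : Set.Icc (0:ℝ) 1 → ℝ := (twS n).indicator 1

lemma twS_meas (n : ℕ) : MeasurableSet (twS n) :=
  measurableSet_Icc.preimage measurable_subtype_coe

lemma tw_meas (n : ℕ) : Measurable (tw n) :=
  measurable_const.indicator (twS_meas n)

lemma twM_encode (m k : ℕ) (hk : k < 2 ^ m) : twM (2 ^ m + k) = m :=
  Nat.log_eq_of_pow_le_of_lt_pow (Nat.le_add_right _ _)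
    (by rw [pow_succ]; omega)

lemma twK_encode (m k : ℕ) (hk : k < 2 ^ m) : twK (2 ^ m + k) = k := by
  rw [twK, twM_encode m k hk]; omega

lemma tw_mem {n : ℕ} {x : Set.Icc (0:ℝ) 1} (h : x ∈ twS n) : tw n x = 1 := by
  simp [tw, Set.indicator_of_mem h]

lemma tw_nmem {n : ℕ} {x : Set.Icc (0:ℝ) 1} (h : x ∉ twS n) : tw n x = 0 := by
  simp [tw, Set.indicator_of_notMem h]

lemma tw_freq_one (x : Set.Icc (0:ℝ) 1) : ∃ᶠ n in atTop, tw n x = 1 := by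
  rw [frequently_atTop]
  intro N
  obtain ⟨hx0, hx1⟩ := x.2
  have h2 : (0:ℝ) < 2 ^ N := by positivity
  have hNidx : N ≤ 2 ^ N := Nat.le_of_lt (Nat.lt_two_pow_self (n := N))
  by_cases hKlt : ⌊(x:ℝ) * 2 ^ N⌋₊ < 2 ^ N
  · refine ⟨2 ^ N + ⌊(x:ℝ) * 2 ^ N⌋₊, le_trans hNidx (Nat.le_add_right _ _), ?_⟩
    apply tw_mem
    constructor
    · rw [twA, twK_encode _ _ hKlt, twM_encode _ _ hKlt, div_le_iff₀ h2]
      exact Nat.floor_le (by positivity)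
    · rw [twB, twK_encode _ _ hKlt, twM_encode _ _ hKlt, le_div_iff₀ h2]
      exact le_of_lt (Nat.lt_floor_add_one _)
  · have hpos : (1:ℕ) ≤ 2 ^ N := Nat.one_le_two_pow
    have hk : 2 ^ N - 1 < 2 ^ N := by omega
    refine ⟨2 ^ N + (2 ^ N - 1), le_trans hNidx (Nat.le_add_right _ _), ?_⟩
    apply tw_mem
    have hto : (1:ℝ) ≤ (x:ℝ) := by
      have h1 : (2:ℝ) ^ N ≤ ((⌊(x:ℝ) * 2 ^ N⌋₊ : ℕ) : ℝ) := by
        calc (2:ℝ) ^ N = ((2 ^ N : ℕ) : ℝ) := by push_cast; ring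
        _ ≤ _ := by exact_mod_cast Nat.not_lt.mp hKlt
      have h2' : ((⌊(x:ℝ) * 2 ^ N⌋₊ : ℕ) : ℝ) ≤ (x:ℝ) * 2 ^ N := Nat.floor_le (by positivity)
      nlinarith
    have ht1 : (x:ℝ) = 1 := le_antisymm hx1 hto
    have hcast : ((2 ^ N - 1 : ℕ) : ℝ) = 2 ^ N - 1 := by push_cast [hpos]; ring
    constructor
    · rw [twA, twK_encode _ _ hk, twM_encode _ _ hk, hcast, div_le_iff₀ h2, ht1]; linarith
    · rw [twB, twK_encode _ _ hk, twM_encode _ _ hk, hcast, le_div_iff₀ h2, ht1]; linarith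

lemma tw_freq_zero (x : Set.Icc (0:ℝ) 1) : ∃ᶠ n in atTop, tw n x = 0 := by
  rw [frequently_atTop]
  intro N
  obtain ⟨hx0, hx1⟩ := x.2
  set m : ℕ := max N 2 with hm
  have h2 : (0:ℝ) < 2 ^ m := by positivity
  have hpow4 : (4:ℝ) ≤ 2 ^ m := by
    calc (4:ℝ) = 2 ^ 2 := by norm_num
    _ ≤ 2 ^ m := pow_le_pow_right₀ (by norm_num) (le_max_right N 2)
  have hNle : N ≤ 2 ^ m := le_trans (le_max_left N 2) (Nat.le_of_lt (Nat.lt_two_pow_self (n := m)))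
  have hposn : (1:ℕ) ≤ 2 ^ m := Nat.one_le_two_pow
  by_cases hhalf : (1:ℝ)/2 ≤ (x:ℝ)
  · have hk : 0 < 2 ^ m := hposn
    refine ⟨2 ^ m + 0, by omega, ?_⟩
    apply tw_nmem
    intro hmem
    obtain ⟨-, hub⟩ := hmem
    rw [twB, twK_encode _ _ hk, twM_encode _ _ hk] at hub
    simp only [Nat.cast_zero, zero_add] at hub
    have hq : (1:ℝ)/2^m ≤ 1/4 := by
      rw [div_le_div_iff₀ h2 (by norm_num)]; linarith
    linarith
  · push_neg at hhalf
    have hk : 2 ^ m - 1 < 2 ^ m := by omega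
    refine ⟨2 ^ m + (2 ^ m - 1), by omega, ?_⟩
    apply tw_nmem
    intro hmem
    obtain ⟨hlb, -⟩ := hmem
    rw [twA, twK_encode _ _ hk, twM_encode _ _ hk] at hlb
    have hcast : ((2 ^ m - 1 : ℕ) : ℝ) = 2 ^ m - 1 := by push_cast [hposn]; ring
    rw [hcast, div_le_iff₀ h2] at hlb
    nlinarith

lemma twM_tendsto : Tendsto twM atTop atTop := by
  rw [tendsto_atTop]
  intro b
  rw [eventually_atTop]
  refine ⟨2 ^ b, fun n hn => ?_⟩
  have hn0 : n ≠ 0 := by have : (1:ℕ) ≤ 2 ^ b := Nat.one_le_two_pow; omega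
  exact (Nat.le_log_iff_pow_le one_lt_two hn0).mpr hn

lemma vol_preimage (t : Set ℝ) (ht : MeasurableSet t) :
    volume ((Subtype.val ⁻¹' t : Set (Set.Icc (0:ℝ) 1))) = volume (t ∩ Set.Icc (0:ℝ) 1) := by
  rw [show (volume : Measure (Set.Icc (0:ℝ) 1)) = Measure.comap Subtype.val volume from rfl,
    comap_subtype_coe_apply measurableSet_Icc, Set.image_preimage_eq_inter_range,
    Subtype.range_coe]

lemma tw_tendstoInMeasure :
    TendstoInMeasure (volume : Measure (Set.Icc (0:ℝ) 1)) tw atTop (fun _ => 0) := by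
  intro ε hε
  have hbound : ∀ n, volume {x : Set.Icc (0:ℝ) 1 | ε ≤ edist (tw n x) 0} ≤
      ENNReal.ofReal ((1:ℝ) / 2 ^ twM n) := by
    intro n
    have hsub : {x : Set.Icc (0:ℝ) 1 | ε ≤ edist (tw n x) 0} ⊆ twS n := by
      intro x hx
      by_contra hmem
      rw [Set.mem_setOf_eq, tw_nmem hmem, edist_self] at hx
      exact (not_le.mpr hε) hx
    calc volume {x : Set.Icc (0:ℝ) 1 | ε ≤ edist (tw n x) 0}
        ≤ volume (twS n) := measure_mono hsub
      _ = volume (Set.Icc (twA n) (twB n) ∩ Set.Icc (0:ℝ) 1) := vol_preimage _ measurableSet_Icc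
      _ ≤ volume (Set.Icc (twA n) (twB n)) := measure_mono Set.inter_subset_left
      _ = ENNReal.ofReal (twB n - twA n) := Real.volume_Icc
      _ = ENNReal.ofReal ((1:ℝ) / 2 ^ twM n) := by
          congr 1
          rw [twA, twB]
          field_simp
          ring
  have hlim : Tendsto (fun n => ENNReal.ofReal ((1:ℝ) / 2 ^ twM n)) atTop (𝓝 0) := by
    rw [show (0 : ENNReal) = ENNReal.ofReal 0 by simp]
    apply (ENNReal.continuous_ofReal.tendsto 0).comp
    have h : Tendsto (fun m : ℕ => (1:ℝ) / 2 ^ m) atTop (𝓝 0) := by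
      simp_rw [one_div, ← inv_pow]
      exact tendsto_pow_atTop_nhds_zero_of_lt_one (by norm_num) (by norm_num)
    exact h.comp twM_tendsto
  exact tendsto_of_tendsto_of_tendsto_of_le_of_le tendsto_const_nhds hlim
    (fun n => zero_le) hbound

end

theorem stmt4 :
    ¬ ∃ τ : TopologicalSpace ((Set.Icc (0:ℝ) 1) →ₘ[volume] ℝ),
      ∀ (F : ℕ → ((Set.Icc (0:ℝ) 1) →ₘ[volume] ℝ))
        (G : (Set.Icc (0:ℝ) 1) →ₘ[volume] ℝ),
        Tendsto F atTop (@nhds _ τ G) ↔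
          ∀ᵐ x ∂volume, Tendsto (fun n => F n x) atTop (𝓝 (G x)) := by
  rintro ⟨τ, hτ⟩
  set F : ℕ → ((Set.Icc (0:ℝ) 1) →ₘ[volume] ℝ) :=
    fun n => AEEqFun.mk (tw n) (tw_meas n).aestronglyMeasurable with hF
  have hcoe : ∀ᵐ x ∂(volume : Measure (Set.Icc (0:ℝ) 1)), ∀ n, F n x = tw n x := by
    rw [ae_all_iff]
    exact fun n => AEEqFun.coeFn_mk _ _
  have hzero := AEEqFun.coeFn_zero (α := Set.Icc (0:ℝ) 1) (β := ℝ) (μ := volume)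
  haveI : NeBot (ae (volume : Measure (Set.Icc (0:ℝ) 1))) :=
    ae_neBot.mpr (IsProbabilityMeasure.ne_zero _)
  have hnot : ¬ Tendsto F atTop (@nhds _ τ 0) := by
    rw [hτ]
    intro h
    obtain ⟨x, hhx, hz⟩ := ((h.and hcoe).and hzero).exists
    obtain ⟨hx, hc⟩ := hhx
    rw [hz] at hx
    simp only [hc] at hx
    have hev : ∀ᶠ n in atTop, tw n x ∈ Metric.ball (0:ℝ) (1/2) :=
      hx (Metric.ball_mem_nhds 0 (by norm_num))
    obtain ⟨n, h1, h2⟩ := ((tw_freq_one x).and_eventually hev).exists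
    rw [h1, Metric.mem_ball] at h2
    simp at h2
    norm_num at h2
  rw [not_tendsto_iff_exists_frequently_notMem] at hnot
  obtain ⟨U, hU, hfreq⟩ := hnot
  obtain ⟨ns, hns, hout⟩ := extraction_of_frequently_atTop hfreq
  have hsubm : TendstoInMeasure (volume : Measure (Set.Icc (0:ℝ) 1))
      (fun i => tw (ns i)) atTop (fun _ => 0) :=
    fun ε hε => (tw_tendstoInMeasure ε hε).comp hns.tendsto_atTop
  obtain ⟨ms, hms, hae⟩ := hsubm.exists_seq_tendsto_ae
  have htend : Tendsto (fun i => F (ns (ms i))) atTop (@nhds _ τ 0) := by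
    rw [hτ]
    filter_upwards [hae, hcoe, hzero] with x hx hc hz
    rw [hz]
    simp only [hc]
    exact hx
  have hev : ∀ᶠ i in atTop, F (ns (ms i)) ∈ U := mem_map.mp (htend hU)
  obtain ⟨i, hi⟩ := hev.exists
  exact hout (ms i) hi
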